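/- Let G be the presented group on generators a, x with relators a⁵ and x a x⁻¹ a² (so G ≅ Z/5Z ⋊ Z, where conjugation by x sends a to a⁻², equivalently to a³). For every nontrivial normal subgroup N of G, the quotient G/N is either abelian, or there exists a finite symmetric generating set B of G/N such that the geodesic language Geo(G/N, B) is not piecewise excluding. -/

import Mathlib

/-- `w` is a word over the alphabet `A`: every letter of `w` lies in `A`. -/
def IsWordOver {G : Type*} (A : Finset G) (w : List G) : Prop :=
  ∀ x ∈ w, x ∈ A

/-- `A` is a finite symmetric (inverse-closed) generating set of the group `G`. -/
def IsSymmGen {G : Type*} [Group G] (A : Finset G) : Prop :=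
  Subgroup.closure (A : Set G) = ⊤ ∧ ∀ a ∈ A, a⁻¹ ∈ A

/-- `w` is a geodesic word over `A`: no word over `A` of strictly smaller length
evaluates to the same element of `G`. -/
def IsGeodesic {G : Type*} [Group G] (A : Finset G) (w : List G) : Prop :=
  IsWordOver A w ∧
    ∀ v : List G, IsWordOver A v → v.prod = w.prod → w.length ≤ v.length

/-- The geodesic language of `G` over `A`. -/
def Geo {G : Type*} [Group G] (A : Finset G) : Set (List G) :=
  {w | IsGeodesic A w}

/-- A language `L` of words over `A` is piecewise excluding if there is a finite set `F`
of words over `A` such that a word `w` over `A` lies in `L` iff no element of `F` is a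
piecewise subword (i.e. a not-necessarily-contiguous subsequence) of `w`. -/
def PiecewiseExcluding {G : Type*} (A : Finset G) (L : Set (List G)) : Prop :=
  ∃ F : Finset (List G), (∀ u ∈ F, IsWordOver A u) ∧
    ∀ w : List G, IsWordOver A w → (w ∈ L ↔ ∀ u ∈ F, ¬ List.Sublist u w)

/-- The relators of `⟨a, x ∣ a⁵, x a x⁻¹ a²⟩ ≅ ℤ/5ℤ ⋊ ℤ`, with `a` the image of `0`
and `x` the image of `1`. -/
def z5zRels : Set (FreeGroup (Fin 2)) :=
  {(FreeGroup.of 0) ^ 5,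
   FreeGroup.of 1 * FreeGroup.of 0 * (FreeGroup.of 1)⁻¹ * (FreeGroup.of 0) ^ 2}

/-! ### Auxiliary: a concrete group of order 20, `ℤ/5 ⋊ ℤ/4` -/

@[ext]
structure M20 where
  r : ZMod 5
  s : ZMod 4
deriving DecidableEq, Fintype

namespace M20

instance : Mul M20 := ⟨fun g h => ⟨g.r + 3 ^ g.s.val * h.r, g.s + h.s⟩⟩
instance : One M20 := ⟨⟨0, 0⟩⟩
instance : Inv M20 := ⟨fun g => ⟨-(3 ^ (-g.s).val * g.r), -g.s⟩⟩

@[simp] lemma mul_mk (r1 s1 r2 s2) :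
    (⟨r1, s1⟩ * ⟨r2, s2⟩ : M20) = ⟨r1 + 3 ^ s1.val * r2, s1 + s2⟩ := rfl
@[simp] lemma one_def : (1 : M20) = ⟨0, 0⟩ := rfl
@[simp] lemma inv_mk (r1 s1) : (⟨r1, s1⟩ : M20)⁻¹ = ⟨-(3 ^ (-s1).val * r1), -s1⟩ := rfl

lemma key : ∀ u v : ZMod 4, (3 : ZMod 5) ^ (u + v).val = 3 ^ u.val * 3 ^ v.val := by decide

instance : Group M20 where
  mul_assoc a b c := by
    obtain ⟨r1, s1⟩ := a; obtain ⟨r2, s2⟩ := b; obtain ⟨r3, s3⟩ := c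
    simp only [mul_mk, mk.injEq, key]
    exact ⟨by ring, add_assoc _ _ _⟩
  one_mul a := by obtain ⟨r, s⟩ := a; simp
  mul_one a := by obtain ⟨r, s⟩ := a; simp
  inv_mul_cancel a := by
    obtain ⟨r, s⟩ := a
    simp only [inv_mk, mul_mk, one_def, mk.injEq]
    exact ⟨by ring, neg_add_cancel s⟩

end M20

def mA : M20 := ⟨1, 0⟩
def mX : M20 := ⟨0, 1⟩
def mY : M20 := mA * mX

/-- The six letters in `M20` our generating set maps to. -/
def BM : Finset M20 := {mA, mA⁻¹, mX, mX⁻¹, mY, mY⁻¹}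

/-- Elements of `M20` reachable by words over `BM` of length at most `n`. -/
def reach : ℕ → Finset M20
  | 0 => {1}
  | n + 1 => reach n ∪ BM.biUnion fun b => (reach n).image fun m => b * m

lemma reach_subset_succ (n : ℕ) : reach n ⊆ reach (n + 1) := by
  intro a ha
  simp only [reach, Finset.mem_union]
  exact Or.inl ha

lemma reach_mono : ∀ {m n : ℕ}, m ≤ n → reach m ⊆ reach n := by
  intro m n h
  induction n, h using Nat.le_induction with
  | base => exact fun _ => id
  | succ n _ ih => exact fun a ha => reach_subset_succ n (ih ha)

lemma prod_mem_reach : ∀ l : List M20, (∀ b ∈ l, b ∈ BM) → l.prod ∈ reach l.length := by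
  intro l
  induction l with
  | nil => intro _; simp [reach]
  | cons b t ih =>
    intro h
    have hb := h b List.mem_cons_self
    have ht := ih fun c hc => h c (List.mem_cons_of_mem _ hc)
    simp only [List.prod_cons, List.length_cons, reach, Finset.mem_union, Finset.mem_biUnion]
    exact Or.inr ⟨b, hb, Finset.mem_image.2 ⟨t.prod, ht, rfl⟩⟩

/-! ### Auxiliary facts about the presented group -/

namespace Z5Z

abbrev G := PresentedGroup z5zRels

def a : G := PresentedGroup.of 0
def x : G := PresentedGroup.of 1

lemma mk_eq_one {r : FreeGroup (Fin 2)} (hr : r ∈ z5zRels) :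
    PresentedGroup.mk z5zRels r = 1 :=
  (QuotientGroup.eq_one_iff r).2 (Subgroup.subset_normalClosure hr)

lemma ha5 : a ^ 5 = 1 := by
  have h : PresentedGroup.mk z5zRels ((FreeGroup.of 0) ^ 5) = 1 :=
    mk_eq_one (Set.mem_insert _ _)
  rwa [map_pow] at h

lemma hrel : x * a * x⁻¹ * a ^ 2 = 1 := by
  have h : PresentedGroup.mk z5zRels
      (FreeGroup.of 1 * FreeGroup.of 0 * (FreeGroup.of 1)⁻¹ * (FreeGroup.of 0) ^ 2) = 1 :=
    mk_eq_one (Set.mem_insert_iff.2 (Or.inr rfl))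
  rwa [map_mul, map_mul, map_mul, map_inv, map_pow] at h

lemma hxax : x * a * x⁻¹ = a ^ 3 := by
  have h1 : x * a * x⁻¹ = (a ^ 2)⁻¹ := by
    rw [eq_inv_iff_mul_eq_one]; exact hrel
  rw [h1, inv_eq_iff_mul_eq_one, ← pow_add]
  exact ha5

lemma hxinv : x⁻¹ * a * x = a ^ 2 := by
  have h6 : x * a ^ 2 * x⁻¹ = a := by
    have h : x * a ^ 2 * x⁻¹ = (x * a * x⁻¹) ^ 2 := by rw [sq, sq]; group
    rw [h, hxax, ← pow_mul, show 3 * 2 = 5 + 1 from rfl, pow_add, ha5, pow_one, one_mul]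
  conv_lhs => rw [← h6]
  group

lemma ha5z : a ^ (5 : ℤ) = 1 := by
  rw [show (5 : ℤ) = ((5 : ℕ) : ℤ) from rfl, zpow_natCast, ha5]

lemma apow_congr {i j : ℤ} (h : (5 : ℤ) ∣ i - j) : a ^ i = a ^ j := by
  obtain ⟨k, hk⟩ := h
  have hij : i = j + 5 * k := by omega
  rw [hij, zpow_add, zpow_mul, ha5z, one_zpow, mul_one]

lemma hxaxz : x * a * x⁻¹ = a ^ ((3 : ℤ)) := by
  rw [show ((3 : ℤ)) = ((3 : ℕ) : ℤ) from rfl, zpow_natCast]; exact hxax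

lemma hxinvz : x⁻¹ * a * x = a ^ ((2 : ℤ)) := by
  rw [show ((2 : ℤ)) = ((2 : ℕ) : ℤ) from rfl, zpow_natCast]; exact hxinv

lemma conj_nat (n : ℕ) : x ^ (n : ℤ) * a * x ^ (-(n : ℤ)) = a ^ ((3 : ℤ) ^ n) := by
  induction n with
  | zero => simp
  | succ n ih =>
    have h1 : x ^ ((n + 1 : ℕ) : ℤ) * a * x ^ (-((n + 1 : ℕ) : ℤ)) =
        x * (x ^ (n : ℤ) * a * x ^ (-(n : ℤ))) * x⁻¹ := by
      push_cast
      rw [show ((n : ℤ) + 1) = 1 + (n : ℤ) by ring, zpow_add, neg_add, zpow_add, zpow_one]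
      group
    rw [h1, ih]
    have h2 : x * a ^ ((3 : ℤ) ^ n) * x⁻¹ = (x * a * x⁻¹) ^ ((3 : ℤ) ^ n) := by
      simpa [MulAut.conj_apply] using map_zpow (MulAut.conj x) a ((3 : ℤ) ^ n)
    rw [h2, hxaxz, ← zpow_mul, pow_succ]
    exact apow_congr ⟨0, by ring⟩

lemma conj_neg_nat (n : ℕ) : x ^ (-(n : ℤ)) * a * x ^ ((n : ℤ)) = a ^ ((2 : ℤ) ^ n) := by
  induction n with
  | zero => simp
  | succ n ih =>
    have h1 : x ^ (-((n + 1 : ℕ) : ℤ)) * a * x ^ (((n + 1 : ℕ) : ℤ)) =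
        x⁻¹ * (x ^ (-(n : ℤ)) * a * x ^ ((n : ℤ))) * x := by
      push_cast
      rw [neg_add, zpow_add, zpow_add, zpow_neg_one, zpow_one]
      group
    rw [h1, ih]
    have h2 : x⁻¹ * a ^ ((2 : ℤ) ^ n) * x = (x⁻¹ * a * x) ^ ((2 : ℤ) ^ n) := by
      simpa [MulAut.conj_apply] using map_zpow (MulAut.conj x⁻¹) a ((2 : ℤ) ^ n)
    rw [h2, hxinvz, ← zpow_mul, pow_succ]
    exact apow_congr ⟨0, by ring⟩

lemma pow3_mod (n : ℕ) : (5 : ℤ) ∣ (3 : ℤ) ^ n - 3 ^ (n % 4) := by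
  have h : (3 : ℤ) ^ n = ((3 ^ 4) ^ (n / 4)) * 3 ^ (n % 4) := by
    rw [← pow_mul, ← pow_add]; congr 1; omega
  have h2 : ((3 : ℤ) ^ 4) ^ (n / 4) ≡ 1 ^ (n / 4) [ZMOD 5] := Int.ModEq.pow _ (by decide)
  have h3 : (3 : ℤ) ^ n ≡ 3 ^ (n % 4) [ZMOD 5] := by
    rw [h]
    calc ((3 : ℤ) ^ 4) ^ (n / 4) * 3 ^ (n % 4) ≡ 1 ^ (n / 4) * 3 ^ (n % 4) [ZMOD 5] :=
          Int.ModEq.mul h2 Int.ModEq.rfl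
      _ = 3 ^ (n % 4) := by rw [one_pow, one_mul]
  exact Int.ModEq.dvd h3.symm

lemma pow2_mod (n : ℕ) : (5 : ℤ) ∣ (2 : ℤ) ^ n - 2 ^ (n % 4) := by
  have h : (2 : ℤ) ^ n = ((2 ^ 4) ^ (n / 4)) * 2 ^ (n % 4) := by
    rw [← pow_mul, ← pow_add]; congr 1; omega
  have h2 : ((2 : ℤ) ^ 4) ^ (n / 4) ≡ 1 ^ (n / 4) [ZMOD 5] := Int.ModEq.pow _ (by decide)
  have h3 : (2 : ℤ) ^ n ≡ 2 ^ (n % 4) [ZMOD 5] := by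
    rw [h]
    calc ((2 : ℤ) ^ 4) ^ (n / 4) * 2 ^ (n % 4) ≡ 1 ^ (n / 4) * 2 ^ (n % 4) [ZMOD 5] :=
          Int.ModEq.mul h2 Int.ModEq.rfl
      _ = 2 ^ (n % 4) := by rw [one_pow, one_mul]
  exact Int.ModEq.dvd h3.symm

/-- The exponent of the conjugation action: `x^m a x^(-m) = a^(e m)`. -/
noncomputable def e (m : ℤ) : ℤ := (3 : ℤ) ^ (m % 4).toNat

lemma conj_a (m : ℤ) : x ^ m * a * x ^ (-m) = a ^ e m := by
  rcases le_or_gt 0 m with hm | hm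
  · obtain ⟨n, rfl⟩ : ∃ n : ℕ, m = (n : ℤ) := ⟨m.toNat, (Int.toNat_of_nonneg hm).symm⟩
    rw [conj_nat]
    apply apow_congr
    have h1 : ((n : ℤ) % 4).toNat = n % 4 := by omega
    rw [e, h1]
    exact pow3_mod n
  · obtain ⟨n, rfl⟩ : ∃ n : ℕ, m = -(n : ℤ) := ⟨(-m).toNat, by omega⟩
    rw [show -(-(n : ℤ)) = (n : ℤ) by ring, conj_neg_nat]
    apply apow_congr
    have hpm := pow2_mod n
    have h4 : ((-(n : ℤ)) % 4).toNat = (4 - n % 4) % 4 := by omega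
    rw [e, h4]
    have h5 : (5 : ℤ) ∣ 2 ^ (n % 4) - 3 ^ ((4 - n % 4) % 4) := by
      have hn : n % 4 = 0 ∨ n % 4 = 1 ∨ n % 4 = 2 ∨ n % 4 = 3 := by omega
      rcases hn with h | h | h | h <;> rw [h] <;> decide
    omega

lemma conj_apow (m i : ℤ) : x ^ m * a ^ i * x ^ (-m) = a ^ (e m * i) := by
  have h2 : x ^ m * a ^ i * x ^ (-m) = (x ^ m * a * x ^ (-m)) ^ i := by
    have h := map_zpow (MulAut.conj (x ^ m)) a i
    simp only [MulAut.conj_apply] at h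
    rw [← zpow_neg] at h
    exact h
  rw [h2, conj_a, ← zpow_mul]

lemma xpow_mul_apow (m i : ℤ) : x ^ m * a ^ i = a ^ (e m * i) * x ^ m := by
  calc x ^ m * a ^ i = (x ^ m * a ^ i * x ^ (-m)) * x ^ m := by group
    _ = a ^ (e m * i) * x ^ m := by rw [conj_apow]

lemma normal_form (g : G) : ∃ i m : ℤ, g = a ^ i * x ^ m := by
  have hg : g ∈ Subgroup.closure (Set.range (PresentedGroup.of : Fin 2 → G)) := by
    rw [PresentedGroup.closure_range_of]; trivial
  induction hg using Subgroup.closure_induction with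
  | mem g hgen =>
    obtain ⟨i, rfl⟩ := hgen
    fin_cases i
    · exact ⟨1, 0, by simp [a]⟩
    · exact ⟨0, 1, by simp [x]⟩
  | one => exact ⟨0, 0, by simp⟩
  | mul g h _ _ ihg ihh =>
    obtain ⟨i, m, rfl⟩ := ihg
    obtain ⟨j, l, rfl⟩ := ihh
    refine ⟨i + e m * j, m + l, ?_⟩
    calc a ^ i * x ^ m * (a ^ j * x ^ l) = a ^ i * (x ^ m * a ^ j) * x ^ l := by group
      _ = a ^ i * (a ^ (e m * j) * x ^ m) * x ^ l := by rw [xpow_mul_apow]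
      _ = a ^ (i + e m * j) * x ^ (m + l) := by rw [zpow_add, zpow_add]; group
  | inv g _ ihg =>
    obtain ⟨i, m, rfl⟩ := ihg
    refine ⟨e (-m) * (-i), -m, ?_⟩
    calc (a ^ i * x ^ m)⁻¹ = x ^ (-m) * a ^ (-i) := by group
      _ = a ^ (e (-m) * (-i)) * x ^ (-m) := by rw [xpow_mul_apow]

lemma a_mem_of_apow_mem (N : Subgroup G) {j : ℤ} (hj : a ^ j ∈ N) (h5 : ¬(5 : ℤ) ∣ j) :
    a ∈ N := by
  have hg : (Int.gcd j 5 : ℤ) = j * Int.gcdA j 5 + 5 * Int.gcdB j 5 := Int.gcd_eq_gcd_ab j 5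
  have hd : (Int.gcd j 5 : ℤ) ∣ 5 := Int.gcd_dvd_right _ _
  have h15 : Int.gcd j 5 = 1 ∨ Int.gcd j 5 = 5 :=
    (by norm_num : Nat.Prime 5).eq_one_or_self_of_dvd _ (by exact_mod_cast hd)
  rcases h15 with h1 | h5'
  · have ha : a = (a ^ j) ^ Int.gcdA j 5 * (a ^ (5 : ℤ)) ^ Int.gcdB j 5 := by
      rw [← zpow_mul, ← zpow_mul, ← zpow_add, ← hg, h1]
      norm_num
    rw [ha, ha5z, one_zpow, mul_one]
    exact N.zpow_mem hj _
  · exfalso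
    apply h5
    have hl := Int.gcd_dvd_left (a := j) (b := 5)
    rwa [h5'] at hl

/-- The map to the concrete group of order 20. -/
def fgen : Fin 2 → M20 := ![mA, mX]

lemma hrels : ∀ r ∈ z5zRels, FreeGroup.lift fgen r = 1 := by
  intro r hr
  rcases Set.mem_insert_iff.1 hr with rfl | hr'
  · rw [map_pow, FreeGroup.lift_apply_of]
    decide
  · rcases hr' with rfl
    rw [map_mul, map_mul, map_mul, map_inv, map_pow, FreeGroup.lift_apply_of, FreeGroup.lift_apply_of]
    decide

noncomputable def phi : G →* M20 := PresentedGroup.toGroup hrels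

lemma phi_a : phi a = mA := PresentedGroup.toGroup.of hrels
lemma phi_x : phi x = mX := PresentedGroup.toGroup.of hrels

/-- Key classification step: if `a ∉ N` then `N ≤ ker phi`. -/
lemma N_le_ker (N : Subgroup G) [hNn : N.Normal] (hA : a ∉ N) : N ≤ phi.ker := by
  intro n hn
  obtain ⟨i, m, rfl⟩ := normal_form n
  -- Step 1: the commutator with x lies in N and equals a^(2i)
  have hc_mem : x * (a ^ i * x ^ m) * x⁻¹ * (a ^ i * x ^ m)⁻¹ ∈ N :=
    N.mul_mem (hNn.conj_mem _ hn x) (N.inv_mem hn)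
  have h1 : x * a ^ i * x⁻¹ = a ^ (3 * i) := by
    have h := conj_apow 1 i
    have he1 : e 1 = 3 := by norm_num [e]
    rw [he1, show x ^ (1 : ℤ) = x by group, show x ^ (-1 : ℤ) = x⁻¹ by group] at h
    exact h
  have hc_eq : x * (a ^ i * x ^ m) * x⁻¹ * (a ^ i * x ^ m)⁻¹ = a ^ (2 * i) := by
    have hr : x * (a ^ i * x ^ m) * x⁻¹ * (a ^ i * x ^ m)⁻¹ =
        (x * a ^ i * x⁻¹) * a ^ (-i) := by group
    rw [hr, h1, ← zpow_add, show 3 * i + -i = 2 * i by ring]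
  rw [hc_eq] at hc_mem
  -- Step 2: 5 ∣ i, so a^i = 1
  have h5i : (5 : ℤ) ∣ i := by
    by_contra h5
    exact hA (a_mem_of_apow_mem N hc_mem (by omega))
  have hai : a ^ i = 1 := by
    obtain ⟨i', rfl⟩ := h5i
    rw [zpow_mul, ha5z, one_zpow]
  rw [hai, one_mul] at hn ⊢
  -- Step 3: the commutator with a lies in N and equals a^(1 - e m)
  have hd_mem : a * x ^ m * a⁻¹ * (x ^ m)⁻¹ ∈ N :=
    N.mul_mem (hNn.conj_mem _ hn a) (N.inv_mem hn)
  have hd_eq : a * x ^ m * a⁻¹ * (x ^ m)⁻¹ = a ^ (1 + e m * (-1)) := by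
    have h3 := conj_apow m (-1)
    have hr : a * x ^ m * a⁻¹ * (x ^ m)⁻¹ = a * (x ^ m * a ^ (-(1 : ℤ)) * x ^ (-m)) := by
      group
    rw [hr, h3, zpow_add, zpow_one]
  rw [hd_eq] at hd_mem
  -- Step 4: 4 ∣ m, hence phi (x^m) = 1
  have h4m : (4 : ℤ) ∣ m := by
    by_contra h4
    have hm : m % 4 = 1 ∨ m % 4 = 2 ∨ m % 4 = 3 := by omega
    have hne : ¬(5 : ℤ) ∣ (1 + e m * (-1)) := by
      rcases hm with h | h | h <;> rw [e, h] <;> decide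
    exact hA (a_mem_of_apow_mem N hd_mem hne)
  obtain ⟨q, rfl⟩ := h4m
  have hx4 : phi x ^ (4 : ℤ) = 1 := by rw [phi_x]; decide
  rw [MonoidHom.mem_ker, map_zpow, zpow_mul, hx4, one_zpow]

end Z5Z

/-- Every proper quotient of `⟨a, x ∣ a⁵, x a x⁻¹ a²⟩` is either abelian or has a finite
symmetric generating set whose geodesic language is not piecewise excluding. -/
theorem z5z_proper_quotients
    (N : Subgroup (PresentedGroup z5zRels)) [N.Normal] (hN : N ≠ ⊥) :
    (∀ x y : PresentedGroup z5zRels ⧸ N, x * y = y * x) ∨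
    ∃ B : Finset (PresentedGroup z5zRels ⧸ N),
      IsSymmGen B ∧ ¬ PiecewiseExcluding B (Geo B) := by
  classical
  by_cases hA : Z5Z.a ∈ N
  · -- the image of `a` dies, so the quotient is cyclic, generated by the image of `x`
    left
    intro q1 q2
    obtain ⟨g1, rfl⟩ := QuotientGroup.mk'_surjective N q1
    obtain ⟨g2, rfl⟩ := QuotientGroup.mk'_surjective N q2
    obtain ⟨i1, m1, rfl⟩ := Z5Z.normal_form g1
    obtain ⟨i2, m2, rfl⟩ := Z5Z.normal_form g2
    have hpa : (QuotientGroup.mk' N) Z5Z.a = 1 := (QuotientGroup.eq_one_iff _).2 hA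
    simp only [map_mul, map_zpow, hpa, one_zpow, one_mul]
    rw [← zpow_add, ← zpow_add, add_comm]
  · right
    -- notation
    set π := QuotientGroup.mk' N with hπ
    set qa := π Z5Z.a with hqa
    set qx := π Z5Z.x with hqx
    set qy := qa * qx with hqy
    -- the lifted homomorphism to the order-20 group
    set ψ : PresentedGroup z5zRels ⧸ N →* M20 :=
      QuotientGroup.lift N Z5Z.phi (Z5Z.N_le_ker N hA) with hψ
    have eA : ψ qa = mA := by
      rw [hqa, hψ, hπ]
      exact (QuotientGroup.lift_mk' N (Z5Z.N_le_ker N hA) Z5Z.a).trans Z5Z.phi_a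
    have eX : ψ qx = mX := by
      rw [hqx, hψ, hπ]
      exact (QuotientGroup.lift_mk' N (Z5Z.N_le_ker N hA) Z5Z.x).trans Z5Z.phi_x
    have eY : ψ qy = mY := by rw [hqy, map_mul, eA, eX]; rfl
    refine ⟨{qa, qa⁻¹, qx, qx⁻¹, qy, qy⁻¹}, ⟨?_, ?_⟩, ?_⟩
    · -- generates
      rw [eq_top_iff]
      rintro q -
      obtain ⟨g, rfl⟩ := QuotientGroup.mk'_surjective N q
      obtain ⟨i, m, rfl⟩ := Z5Z.normal_form g
      rw [map_mul, map_zpow, map_zpow]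
      exact Subgroup.mul_mem _
        (Subgroup.zpow_mem _ (Subgroup.subset_closure
          (by simp [hqa, hπ, QuotientGroup.mk'_apply])) i)
        (Subgroup.zpow_mem _ (Subgroup.subset_closure
          (by simp [hqx, hπ, QuotientGroup.mk'_apply])) m)
    · -- symmetric
      intro b hb
      simp only [Finset.mem_insert, Finset.mem_singleton] at hb ⊢
      rcases hb with rfl | rfl | rfl | rfl | rfl | rfl <;> simp
    · -- geodesic language not piecewise excluding
      set B : Finset (PresentedGroup z5zRels ⧸ N) := {qa, qa⁻¹, qx, qx⁻¹, qy, qy⁻¹} with hB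
      set w : List (PresentedGroup z5zRels ⧸ N) := [qx⁻¹, qy⁻¹, qa⁻¹] with hw
      set u : List (PresentedGroup z5zRels ⧸ N) := [qx⁻¹, qa⁻¹] with hu
      have hword_w : IsWordOver B w := by
        intro c hc
        simp only [hw, List.mem_cons, List.not_mem_nil, or_false] at hc
        rcases hc with rfl | rfl | rfl <;> simp [hB]
      have hword_u : IsWordOver B u := by
        intro c hc
        simp only [hu, List.mem_cons, List.not_mem_nil, or_false] at hc
        rcases hc with rfl | rfl <;> simp [hB]
      have hψB : ∀ b ∈ B, ψ b ∈ BM := by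
        intro b hb
        simp only [hB, Finset.mem_insert, Finset.mem_singleton] at hb
        rcases hb with rfl | rfl | rfl | rfl | rfl | rfl <;>
          simp [map_inv, eA, eX, eY, BM, Finset.mem_insert]
      -- w is geodesic
      have hwgeo : IsGeodesic B w := by
        refine ⟨hword_w, ?_⟩
        intro v hv hp
        by_contra hlen
        push_neg at hlen
        have hv2 : (v.map ψ).length ≤ 2 := by
          rw [List.length_map]
          have : w.length = 3 := by simp [hw]
          omega
        have hvm : ∀ b ∈ v.map ψ, b ∈ BM := by
          intro b hb
          obtain ⟨c, hc, rfl⟩ := List.mem_map.1 hb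
          exact hψB c (hv c hc)
        have hr : (v.map ψ).prod ∈ reach 2 :=
          reach_mono hv2 (prod_mem_reach _ hvm)
        have hprod : (v.map ψ).prod = mX⁻¹ * (mY⁻¹ * (mA⁻¹ * 1)) := by
          rw [← MonoidHom.map_list_prod, hp, hw]
          simp only [List.prod_cons, List.prod_nil]
          rw [map_mul, map_mul, map_mul, map_inv, map_inv, map_inv, map_one, eA, eX, eY]
        rw [hprod] at hr
        exact (by decide : (mX⁻¹ * (mY⁻¹ * (mA⁻¹ * 1)) : M20) ∉ reach 2) hr
      -- u is not geodesic
      have hune : ¬ IsGeodesic B u := by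
        rintro ⟨-, hmin⟩
        have hv0 : IsWordOver B [qy⁻¹] := by
          intro c hc
          simp only [List.mem_cons, List.not_mem_nil, or_false] at hc
          subst hc
          simp [hB]
        have hpe : ([qy⁻¹] : List (PresentedGroup z5zRels ⧸ N)).prod = u.prod := by
          simp only [hu, List.prod_cons, List.prod_nil, mul_one]
          rw [hqy, mul_inv_rev]
        have hle := hmin [qy⁻¹] hv0 hpe
        simp [hu] at hle
      -- u is a subword of w
      have hsub : List.Sublist u w := by
        rw [hu, hw]
        exact List.Sublist.cons₂ _ (List.Sublist.cons _ (List.Sublist.refl _))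
      -- conclude
      rintro ⟨F, hF, hiff⟩
      have hw1 : ∀ f ∈ F, ¬ List.Sublist f w :=
        (hiff w hword_w).1 hwgeo
      have hu2 : ¬ ∀ f ∈ F, ¬ List.Sublist f u := fun h => hune ((hiff u hword_u).2 h)
      push_neg at hu2
      obtain ⟨f, hf, hfu⟩ := hu2
      exact hw1 f hf (hfu.trans hsub)
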